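/- In the multi-period model with per-period demands, suppose x ∈ ℝ_{≥0}^{n×m×T} satisfies u_i^t := Σ_j v_{ij} x_{ij}^t − d_i^t > 0 for all i and t, and λ_j^t ≥ 0, λ_j ≥ 0 are multipliers such that for all i, j, t one has (B_i/T) · v_{ij}/u_i^t ≤ λ_j^t + λ_j, with equality whenever x_{ij}^t > 0. Setting prices p_j^t = λ_j^t + λ_j, every buyer spends exactly their demand-inflated budget: Σ_t Σ_j x_{ij}^t p_j^t = B_i · (1/T) · Σ_t (1 + d_i^t/u_i^t) for every buyer i. -/

import Mathlib

open Finset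

/-- In the multi-period geometric-mean-utility model with per-period demands,
under the KKT stationarity and complementary-slackness conditions, with prices
`p j t = lam j t + mu j`, every buyer spends exactly their demand-inflated
budget `B i * (1/T) * ∑ t, (1 + d i t / u i t)`. -/
theorem geo_mean_demand_inflated_budget
    (n m T : ℕ) (hT : 0 < T)
    (v : Fin n → Fin m → ℝ) (B : Fin n → ℝ) (d : Fin n → Fin T → ℝ)
    (x : Fin n → Fin m → Fin T → ℝ)
    (lam : Fin m → Fin T → ℝ) (mu : Fin m → ℝ)
    (hv : ∀ i j, 0 ≤ v i j) (hB : ∀ i, 0 < B i) (hd : ∀ i t, 0 ≤ d i t)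
    (hx : ∀ i j t, 0 ≤ x i j t)
    (hlam : ∀ j t, 0 ≤ lam j t) (hmu : ∀ j, 0 ≤ mu j)
    (hu : ∀ i t, 0 < (∑ j, v i j * x i j t) - d i t)
    (hkkt : ∀ i j t,
      (B i / T) * v i j / ((∑ j', v i j' * x i j' t) - d i t) ≤ lam j t + mu j)
    (hcs : ∀ i j t, 0 < x i j t →
      (B i / T) * v i j / ((∑ j', v i j' * x i j' t) - d i t) = lam j t + mu j) :
    ∀ i, ∑ t, ∑ j, x i j t * (lam j t + mu j)
      = B i * ((1 / T) *
          ∑ t, (1 + d i t / ((∑ j', v i j' * x i j' t) - d i t))) := by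
  intro i
  have key : ∀ t, ∑ j, x i j t * (lam j t + mu j)
      = (B i / T) * (1 + d i t / ((∑ j', v i j' * x i j' t) - d i t)) := by
    intro t
    set u := (∑ j', v i j' * x i j' t) - d i t with hudef
    have hupos := hu i t
    have step : ∀ j, x i j t * (lam j t + mu j)
        = x i j t * ((B i / T) * v i j / u) := by
      intro j
      rcases eq_or_lt_of_le (hx i j t) with h | h
      · rw [← h]; ring
      · rw [← hcs i j t h]
    calc ∑ j, x i j t * (lam j t + mu j)
        = ∑ j, x i j t * ((B i / T) * v i j / u) := by
          exact Finset.sum_congr rfl fun j _ => step j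
      _ = (B i / T) / u * ∑ j, v i j * x i j t := by
          rw [Finset.mul_sum]; exact Finset.sum_congr rfl fun j _ => by ring
      _ = (B i / T) / u * (u + d i t) := by rw [hudef]; ring
      _ = (B i / T) * (1 + d i t / u) := by
          have hne : u ≠ 0 := ne_of_gt hupos
          field_simp
  rw [Finset.sum_congr rfl fun t _ => key t, ← Finset.mul_sum]
  ring
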